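/- arXiv:2011.02349 — 9 statements merged into one kernel-verified Lean document; each statement's English description precedes it below -/
import Mathlib

section
/- Let Ω be a nonempty finite set equipped with the uniform probability measure P and expectation E. Let n, n⁰ : Ω → ℝ≥0, T : Ω → [0,∞], ξ ∈ [0,1] and fix τ ∈ [0,∞). Assume (i) for every ρ ∈ [0,∞] with P(T = ρ) > 0, E(n | T = ρ) = (1 − ξ·1_{ρ ≤ τ})·E(n⁰ | T = ρ); (ii) n⁰ and T are independent under P; and (iii) 1 − ξ·P(T ≤ τ) > 0. Then for every ρ ∈ [0,∞] with P(T = ρ) > 0, E(n | T = ρ) = ((1 − ξ·1_{ρ ≤ τ})/(1 − ξ·P(T ≤ τ)))·E(n). -/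
open Finset
open scoped Classical ENNReal NNReal

noncomputable section

variable {Ω : Type*} [Fintype Ω]

/-- Number of elements of `Ω` satisfying `E`, as a real number. -/
def cnt (E : Ω → Prop) : ℝ := ((Finset.univ.filter E).card : ℝ)

/-- The uniform (counting) probability of the event `E`. -/
def pr (E : Ω → Prop) : ℝ := cnt E / (Fintype.card Ω : ℝ)

/-- The conditional probability of the event `E` given the event `C`
(junk value `0` if `C` is empty). -/
def prC (C E : Ω → Prop) : ℝ := cnt (fun ω => C ω ∧ E ω) / cnt C

/-- The expectation of `X` under the uniform probability measure. -/
def expec (X : Ω → ℝ) : ℝ := (∑ ω, X ω) / (Fintype.card Ω : ℝ)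

/-- The conditional expectation of `X` given the event `C`, i.e. the average of `X`
over `C` (junk value `0` if `C` is empty). -/
def expecC (C : Ω → Prop) (X : Ω → ℝ) : ℝ :=
  (∑ ω ∈ Finset.univ.filter C, X ω) / cnt C

end

private lemma filter_ext_aux {α : Type*} {p q : α → Prop} (hp : DecidablePred p)
    (hq : DecidablePred q) (h : ∀ a, p a ↔ q a) (s : Finset α) :
    @Finset.filter _ p hp s = @Finset.filter _ q hq s := by
  ext a
  simp only [Finset.mem_filter]
  exact and_congr_right fun _ => h a

private lemma filter_norm {α : Type*} (p : α → Prop) (hp : DecidablePred p) (s : Finset α) :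
    @Finset.filter _ p hp s = @Finset.filter _ p (Classical.decPred p) s :=
  filter_ext_aux _ _ (fun _ => Iff.rfl) _

open Finset in
private lemma sum_cast_eq_sum_image_aux {Ω : Type*} [Fintype Ω] (f : Ω → ℝ≥0) (s : Finset Ω) :
    ∑ ω ∈ s, (f ω : ℝ) =
      ∑ y ∈ Finset.univ.image f, (y : ℝ) * ((s.filter (fun ω => f ω = y)).card : ℝ) := by
  classical
  rw [← Finset.sum_fiberwise_of_maps_to (g := f) (t := Finset.univ.image f)
    (fun ω _ => Finset.mem_image_of_mem f (Finset.mem_univ ω)) (fun ω => (f ω : ℝ))]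
  refine Finset.sum_congr rfl fun y _ => ?_
  calc ∑ ω ∈ s.filter (fun ω => f ω = y), ((f ω : ℝ))
      = ∑ _ω ∈ s.filter (fun ω => f ω = y), (y : ℝ) := by
        refine Finset.sum_congr rfl fun ω hω => ?_
        rw [(Finset.mem_filter.mp hω).2]
    _ = _ := by rw [Finset.sum_const, nsmul_eq_mul, mul_comm]

/-- Under the suppression hypothesis, independence of `n⁰` and `T`,
and `1 − ξ·P(T ≤ τ) > 0`, for every `ρ ∈ [0,∞]` with `P(T = ρ) > 0` one has
`E(n | T = ρ) = ((1 − ξ·1_{ρ ≤ τ})/(1 − ξ·P(T ≤ τ)))·E(n)`. -/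

theorem statement_1 {Ω : Type*} [Fintype Ω] [Nonempty Ω]
    (n n0 : Ω → ℝ≥0) (T : Ω → ℝ≥0∞) (ξ : ℝ) (hξ0 : 0 ≤ ξ) (hξ1 : ξ ≤ 1) (τ : ℝ≥0)
    (hsup : ∀ ρ : ℝ≥0∞, 0 < pr (fun ω => T ω = ρ) →
      expecC (fun ω => T ω = ρ) (fun ω => (n ω : ℝ)) =
        (1 - ξ * (if ρ ≤ (τ : ℝ≥0∞) then (1 : ℝ) else 0)) *
          expecC (fun ω => T ω = ρ) (fun ω => (n0 ω : ℝ)))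
    (hind : ∀ (y : ℝ≥0) (ρ : ℝ≥0∞),
      pr (fun ω => n0 ω = y ∧ T ω = ρ) =
        pr (fun ω => n0 ω = y) * pr (fun ω => T ω = ρ))
    (hpos : 0 < 1 - ξ * pr (fun ω => T ω ≤ (τ : ℝ≥0∞))) :
    ∀ ρ : ℝ≥0∞, 0 < pr (fun ω => T ω = ρ) →
      expecC (fun ω => T ω = ρ) (fun ω => (n ω : ℝ)) =
        ((1 - ξ * (if ρ ≤ (τ : ℝ≥0∞) then (1 : ℝ) else 0)) /
            (1 - ξ * pr (fun ω => T ω ≤ (τ : ℝ≥0∞)))) *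
          expec (fun ω => (n ω : ℝ)) := by
  classical
  have hN : (0:ℝ) < (Fintype.card Ω : ℝ) := by exact_mod_cast Fintype.card_pos
  -- Step A: independence gives fiber sums of n0
  have hA : ∀ σ : ℝ≥0∞,
      ∑ ω ∈ Finset.univ.filter (fun ω => T ω = σ), (n0 ω : ℝ) =
        cnt (fun ω => T ω = σ) * expec (fun ω => (n0 ω : ℝ)) := by
    intro σ
    have hcnt : ∀ y : ℝ≥0,
        cnt (fun ω => n0 ω = y ∧ T ω = σ) * (Fintype.card Ω : ℝ) =
          cnt (fun ω => n0 ω = y) * cnt (fun ω => T ω = σ) := by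
      intro y
      have h := hind y σ
      simp only [pr] at h
      field_simp at h
      have h2 : ((cnt fun ω => n0 ω = y ∧ T ω = σ) * (Fintype.card Ω : ℝ)) *
            (Fintype.card Ω : ℝ) =
          ((cnt fun ω => n0 ω = y) * cnt fun ω => T ω = σ) * (Fintype.card Ω : ℝ) := by
        linear_combination (Fintype.card Ω : ℝ) * h
      exact mul_right_cancel₀ (ne_of_gt hN) h2
    have hfil : ∀ y : ℝ≥0,
        ((((Finset.univ.filter (fun ω => T ω = σ)).filter (fun ω => n0 ω = y)).card : ℕ) : ℝ)
          = cnt (fun ω => n0 ω = y ∧ T ω = σ) := by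
      intro y
      rw [Finset.filter_filter]
      simp only [cnt, filter_norm]
      norm_cast
      exact congrArg Finset.card (filter_ext_aux _ _ (fun a => and_comm) _)
    rw [sum_cast_eq_sum_image_aux]
    have hterm : ∀ y ∈ Finset.univ.image n0,
        (y : ℝ) * (((Finset.univ.filter (fun ω => T ω = σ)).filter
            (fun ω => n0 ω = y)).card : ℝ)
          = (cnt (fun ω => T ω = σ) / (Fintype.card Ω : ℝ)) * ((y : ℝ) *
              (((Finset.univ.filter (fun ω => n0 ω = y)).card : ℝ))) := by
      intro y _
      rw [hfil y]
      have h := hcnt y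
      have h2 : (((Finset.univ.filter (fun ω => n0 ω = y)).card : ℕ) : ℝ) =
          cnt (fun ω => n0 ω = y) := by
        simp only [cnt, filter_norm]
      rw [h2]
      field_simp
      linear_combination (y : ℝ) * h
    rw [Finset.sum_congr rfl hterm, ← Finset.mul_sum,
      ← sum_cast_eq_sum_image_aux n0 Finset.univ, expec]
    ring
  -- positivity of fiber counts
  have hcpos : ∀ σ : ℝ≥0∞, 0 < pr (fun ω => T ω = σ) → 0 < cnt (fun ω => T ω = σ) := by
    intro σ hσ
    simp only [pr] at hσ
    by_contra h
    push_neg at h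
    have : cnt (fun ω => T ω = σ) / (Fintype.card Ω : ℝ) ≤ 0 :=
      div_nonpos_of_nonpos_of_nonneg h (le_of_lt hN)
    linarith
  -- Step A': conditional expec of n0 on nonempty fibers
  have hA' : ∀ σ : ℝ≥0∞, 0 < pr (fun ω => T ω = σ) →
      expecC (fun ω => T ω = σ) (fun ω => (n0 ω : ℝ)) = expec (fun ω => (n0 ω : ℝ)) := by
    intro σ hσ
    have hc := hcpos σ hσ
    rw [expecC, div_eq_iff (ne_of_gt hc)]
    have h := hA σ
    simp only [filter_norm] at h ⊢
    linarith [h]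
  -- fiber sums of n in terms of expec n0
  have hSn : ∀ σ : ℝ≥0∞,
      ∑ ω ∈ Finset.univ.filter (fun ω => T ω = σ), (n ω : ℝ) =
        (1 - ξ * (if σ ≤ (τ : ℝ≥0∞) then (1 : ℝ) else 0)) *
          cnt (fun ω => T ω = σ) * expec (fun ω => (n0 ω : ℝ)) := by
    intro σ
    by_cases hσ : 0 < pr (fun ω => T ω = σ)
    · have hc := hcpos σ hσ
      have h := hsup σ hσ
      rw [hA' σ hσ] at h
      rw [expecC, div_eq_iff (ne_of_gt hc)] at h
      simp only [filter_norm] at h ⊢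
      linear_combination h
    · -- empty fiber: both sides are zero
      have hc : cnt (fun ω => T ω = σ) = 0 := by
        have h0 : 0 ≤ cnt (fun ω => T ω = σ) := by
          simp only [cnt]; positivity
        by_contra h
        have hlt : 0 < cnt (fun ω => T ω = σ) := lt_of_le_of_ne h0 (Ne.symm h)
        exact hσ (div_pos hlt hN)
      have hcard : (Finset.univ.filter (fun ω => T ω = σ)).card = 0 := by
        have h2 := hc
        simp only [cnt, filter_norm] at h2
        rw [filter_norm]
        exact_mod_cast h2
      have hempty : (Finset.univ.filter (fun ω => T ω = σ)) = ∅ :=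
        Finset.card_eq_zero.mp hcard
      rw [hempty, hc]
      simp
  -- total expectation
  have htot : expec (fun ω => (n ω : ℝ)) =
      (1 - ξ * pr (fun ω => T ω ≤ (τ : ℝ≥0∞))) * expec (fun ω => (n0 ω : ℝ)) := by
    have hdecomp : ∑ ω, (n ω : ℝ) =
        ∑ σ ∈ Finset.univ.image T, ∑ ω ∈ Finset.univ.filter (fun ω => T ω = σ), (n ω : ℝ) :=
      (Finset.sum_fiberwise_of_maps_to
        (fun ω _ => Finset.mem_image_of_mem T (Finset.mem_univ ω)) _).symm
    have hcard : (Fintype.card Ω : ℝ) =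
        ∑ σ ∈ Finset.univ.image T, cnt (fun ω => T ω = σ) := by
      have h1 : (Finset.univ : Finset Ω).card =
          ∑ σ ∈ Finset.univ.image T, (Finset.univ.filter (fun ω => T ω = σ)).card :=
        Finset.card_eq_sum_card_fiberwise
          (fun ω _ => Finset.mem_image_of_mem T (Finset.mem_univ ω))
      have h2 : ((Finset.univ : Finset Ω).card : ℝ) =
          ∑ σ ∈ Finset.univ.image T, ((Finset.univ.filter (fun ω => T ω = σ)).card : ℝ) := by
        rw [h1]; push_cast; rfl
      rw [Finset.card_univ] at h2
      rw [h2]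
      refine Finset.sum_congr rfl fun σ _ => ?_
      simp only [cnt, filter_norm]
    have hle : cnt (fun ω => T ω ≤ (τ : ℝ≥0∞)) =
        ∑ σ ∈ (Finset.univ.image T).filter (fun σ => σ ≤ (τ : ℝ≥0∞)),
          cnt (fun ω => T ω = σ) := by
      have h1 : (Finset.univ.filter (fun ω => T ω ≤ (τ : ℝ≥0∞))).card =
          ∑ σ ∈ (Finset.univ.image T).filter (fun σ => σ ≤ (τ : ℝ≥0∞)),
            ((Finset.univ.filter (fun ω => T ω ≤ (τ : ℝ≥0∞))).filter
              (fun ω => T ω = σ)).card :=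
        Finset.card_eq_sum_card_fiberwise
          (fun ω hω => Finset.mem_filter.mpr
            ⟨Finset.mem_image_of_mem T (Finset.mem_univ ω), (Finset.mem_filter.mp hω).2⟩)
      have h2 : cnt (fun ω => T ω ≤ (τ : ℝ≥0∞)) =
          ((Finset.univ.filter (fun ω => T ω ≤ (τ : ℝ≥0∞))).card : ℝ) := by
        simp only [cnt, filter_norm]
      rw [h2, h1]
      push_cast
      refine Finset.sum_congr rfl fun σ hσ => ?_
      have hστ : σ ≤ (τ : ℝ≥0∞) := (Finset.mem_filter.mp hσ).2
      have h3 : ((Finset.univ.filter (fun ω => T ω ≤ (τ : ℝ≥0∞))).filter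
            (fun ω => T ω = σ)) = Finset.univ.filter (fun ω => T ω = σ) := by
        rw [Finset.filter_filter]
        exact filter_ext_aux _ _
          (fun ω => ⟨fun h => h.2, fun h => ⟨h.trans_le hστ, h⟩⟩) _
      rw [h3]
      simp only [cnt, filter_norm]
    have key : ∑ ω, (n ω : ℝ) =
        ((Fintype.card Ω : ℝ) - ξ * cnt (fun ω => T ω ≤ (τ : ℝ≥0∞))) *
          expec (fun ω => (n0 ω : ℝ)) := by
      rw [hdecomp, Finset.sum_congr rfl (fun σ _ => hSn σ), hcard, hle,
        Finset.sum_filter, Finset.mul_sum, ← Finset.sum_sub_distrib, Finset.sum_mul]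
      refine Finset.sum_congr rfl fun σ _ => ?_
      by_cases h : σ ≤ (τ : ℝ≥0∞)
      · rw [if_pos h, if_pos h]; ring
      · rw [if_neg h, if_neg h]; ring
    have hexp : expec (fun ω => (n ω : ℝ)) = (∑ ω, (n ω : ℝ)) / (Fintype.card Ω : ℝ) := rfl
    rw [hexp, key]
    simp only [pr]
    field_simp
  -- conclusion
  intro ρ hρ
  have h := hsup ρ hρ
  rw [hA' ρ hρ] at h
  have hn0 : expec (fun ω => (n0 ω : ℝ)) =
      expec (fun ω => (n ω : ℝ)) / (1 - ξ * pr (fun ω => T ω ≤ (τ : ℝ≥0∞))) := by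
    rw [htot]
    field_simp
  rw [h, hn0]
  ring
end

section
/- Let Ω be a nonempty finite set equipped with the uniform probability measure P and expectation E. Let n, n⁰ : Ω → ℝ≥0, let T : Ω → [0,∞], let G : Ω → ℝ (a severity label, with finite range), let ξ ∈ [0,1] and fix τ ∈ [0,∞). Assume (i) the suppression hypothesis by severity: for every g with P(G = g) > 0 and every ρ ∈ [0,∞] with P(T = ρ, G = g) > 0, E(n | T = ρ, G = g) = (1 − ξ·1_{ρ ≤ τ})·E(n⁰ | T = ρ, G = g); and (ii) n⁰ and T are conditionally independent given G. Then E(n) = Σ_g P(G = g)·E(n⁰ | G = g)·(1 − ξ·P(T ≤ τ | G = g)), where the sum runs over the (finitely many) values g with P(G = g) > 0. -/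
open Finset
open scoped Classical ENNReal NNReal

section Aux

variable {Ω : Type*} [Fintype Ω]

private lemma filter_irrel (p : Ω → Prop) (h1 h2 : DecidablePred p) :
    @Finset.filter Ω p h1 Finset.univ = @Finset.filter Ω p h2 Finset.univ := by
  congr 1

private lemma cnt_congr (p q : Ω → Prop) (h : ∀ ω, p ω ↔ q ω) : cnt p = cnt q := by
  unfold cnt
  congr 2
  apply Finset.filter_congr
  intro ω _
  simpa using h ω

private lemma cnt_zero (p : Ω → Prop) (h : ∀ ω, ¬ p ω) : cnt p = 0 := by
  unfold cnt
  rw [Finset.filter_false_of_mem (fun ω _ => h ω)]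
  simp

private lemma cnt_pos (p : Ω → Prop) (ω : Ω) (hω : p ω) : 0 < cnt p := by
  unfold cnt
  have hmem : ω ∈ Finset.univ.filter p := by simp [hω]
  exact_mod_cast Finset.card_pos.mpr ⟨ω, hmem⟩

private lemma cnt_eq (p : Ω → Prop) [inst : DecidablePred p] :
    cnt p = ((Finset.univ.filter p).card : ℝ) := by
  unfold cnt
  exact_mod_cast congrArg Finset.card (filter_irrel p _ inst)

private lemma sum_irrel (p : Ω → Prop) (h1 h2 : DecidablePred p) (X : Ω → ℝ) :
    ∑ ω ∈ @Finset.filter Ω p h1 Finset.univ, X ω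
      = ∑ ω ∈ @Finset.filter Ω p h2 Finset.univ, X ω := by
  rw [filter_irrel p h1 h2]

private lemma sum_const_filter (p : Ω → Prop) [DecidablePred p] (c : ℝ) :
    ∑ _ω ∈ Finset.univ.filter p, c = cnt p * c := by
  rw [Finset.sum_const, nsmul_eq_mul, cnt_eq p]

private lemma sum_filter_eq (C : Ω → Prop) [inst : DecidablePred C] (X : Ω → ℝ) :
    ∑ ω ∈ Finset.univ.filter C, X ω = expecC C X * cnt C := by
  unfold expecC
  rcases eq_or_ne (cnt C) 0 with h | h
  · rw [h, mul_zero]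
    have hc : ((Finset.univ.filter C).card : ℝ) = 0 := by rw [← cnt_eq C]; exact h
    have he : Finset.univ.filter C = ∅ :=
      Finset.card_eq_zero.mp (Nat.cast_eq_zero.mp hc)
    simp [he]
  · rw [div_mul_cancel₀ _ h]
    exact sum_irrel C inst _ X

private lemma fiber_sum {β : Type*} [DecidableEq β] (X : Ω → ℝ)
    (p : Ω → Prop) [DecidablePred p] (f : Ω → β) :
    ∑ ω ∈ Finset.univ.filter p, X ω
      = ∑ b ∈ Finset.univ.image f,
          ∑ ω ∈ Finset.univ.filter (fun ω => f ω = b ∧ p ω), X ω := by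
  rw [← Finset.sum_fiberwise_of_maps_to (g := f) (t := Finset.univ.image f)
      (fun ω _ => Finset.mem_image_of_mem f (Finset.mem_univ ω)) X]
  apply Finset.sum_congr rfl
  intro b _
  apply Finset.sum_congr _ (fun _ _ => rfl)
  rw [Finset.filter_filter]
  apply Finset.filter_congr
  intro ω _
  simp [and_comm]

private lemma ite_sum (p : Ω → Prop) [DecidablePred p] (q : Ω → Prop) [DecidablePred q]
    (X : Ω → ℝ) :
    ∑ ω ∈ Finset.univ.filter q, (if p ω then X ω else 0)
      = ∑ ω ∈ Finset.univ.filter (fun ω => p ω ∧ q ω), X ω := by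
  rw [← Finset.sum_filter, Finset.filter_filter]
  apply Finset.sum_congr _ (fun _ _ => rfl)
  apply Finset.filter_congr
  intro ω _
  simp [and_comm]

private lemma claim1 [Nonempty Ω] (n n0 : Ω → ℝ≥0) (T : Ω → ℝ≥0∞) (G : Ω → ℝ)
    (ξ : ℝ) (τ : ℝ≥0) (g : ℝ)
    (hsup : ∀ ρ : ℝ≥0∞, 0 < pr (fun ω => T ω = ρ ∧ G ω = g) →
      expecC (fun ω => T ω = ρ ∧ G ω = g) (fun ω => (n ω : ℝ)) =
        (1 - ξ * (if ρ ≤ (τ : ℝ≥0∞) then (1 : ℝ) else 0)) *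
          expecC (fun ω => T ω = ρ ∧ G ω = g) (fun ω => (n0 ω : ℝ))) :
    ∑ ω ∈ Finset.univ.filter (fun ω => G ω = g), (n ω : ℝ)
      = ∑ ω ∈ Finset.univ.filter (fun ω => G ω = g), (n0 ω : ℝ)
        - ξ * ∑ ω ∈ Finset.univ.filter (fun ω => T ω ≤ (τ : ℝ≥0∞) ∧ G ω = g),
            (n0 ω : ℝ) := by
  have hNpos : (0:ℝ) < (Fintype.card Ω : ℝ) := by exact_mod_cast Fintype.card_pos
  rw [fiber_sum (fun ω => (n ω : ℝ)) _ T]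
  have step : ∀ ρ ∈ Finset.univ.image T,
      ∑ ω ∈ Finset.univ.filter (fun ω => T ω = ρ ∧ G ω = g), (n ω : ℝ)
        = (∑ ω ∈ Finset.univ.filter (fun ω => T ω = ρ ∧ G ω = g), (n0 ω : ℝ))
          - ξ * ∑ ω ∈ Finset.univ.filter (fun ω => T ω = ρ ∧ G ω = g),
              (if T ω ≤ (τ : ℝ≥0∞) then (n0 ω : ℝ) else 0) := by
    intro ρ _
    rcases Finset.eq_empty_or_nonempty
        (Finset.univ.filter (fun ω => T ω = ρ ∧ G ω = g)) with he | ⟨ω0, hω0⟩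
    · simp [he]
    · have hmem := Finset.mem_filter.mp hω0
      have hpr : 0 < pr (fun ω => T ω = ρ ∧ G ω = g) :=
        div_pos (cnt_pos _ ω0 hmem.2) hNpos
      have h2 : ∑ ω ∈ Finset.univ.filter (fun ω => T ω = ρ ∧ G ω = g),
            (if T ω ≤ (τ : ℝ≥0∞) then (n0 ω : ℝ) else 0)
          = (if ρ ≤ (τ : ℝ≥0∞) then (1:ℝ) else 0)
              * ∑ ω ∈ Finset.univ.filter (fun ω => T ω = ρ ∧ G ω = g), (n0 ω : ℝ) := by
        rw [Finset.mul_sum]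
        apply Finset.sum_congr rfl
        intro ω hω
        have hT : T ω = ρ := (Finset.mem_filter.mp hω).2.1
        rw [hT]
        by_cases h : ρ ≤ (τ : ℝ≥0∞) <;> simp [h]
      have hA : ∑ ω ∈ Finset.univ.filter (fun ω => T ω = ρ ∧ G ω = g), (n ω : ℝ)
          = (1 - ξ * (if ρ ≤ (τ : ℝ≥0∞) then (1:ℝ) else 0))
              * ∑ ω ∈ Finset.univ.filter (fun ω => T ω = ρ ∧ G ω = g), (n0 ω : ℝ) := by
        rw [sum_filter_eq _ (fun ω => (n ω : ℝ)), sum_filter_eq _ (fun ω => (n0 ω : ℝ)),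
          hsup ρ hpr]
        ring
      rw [hA, h2]
      ring
  rw [Finset.sum_congr rfl step, Finset.sum_sub_distrib, ← Finset.mul_sum,
    ← fiber_sum (fun ω => (n0 ω : ℝ)) _ T,
    ← fiber_sum (fun ω => (if T ω ≤ (τ : ℝ≥0∞) then (n0 ω : ℝ) else 0)) _ T,
    ite_sum]

private lemma claim2 (n0 : Ω → ℝ≥0) (T : Ω → ℝ≥0∞) (G : Ω → ℝ) (τ : ℝ≥0) (g : ℝ)
    (hcg : 0 < cnt (fun ω => G ω = g))
    (hci : ∀ (y : ℝ≥0) (ρ : ℝ≥0∞),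
      prC (fun ω => G ω = g) (fun ω => n0 ω = y ∧ T ω = ρ) =
        prC (fun ω => G ω = g) (fun ω => n0 ω = y) *
          prC (fun ω => G ω = g) (fun ω => T ω = ρ)) :
    (∑ ω ∈ Finset.univ.filter (fun ω => T ω ≤ (τ : ℝ≥0∞) ∧ G ω = g), (n0 ω : ℝ))
        * cnt (fun ω => G ω = g)
      = (∑ ω ∈ Finset.univ.filter (fun ω => G ω = g), (n0 ω : ℝ))
        * cnt (fun ω => G ω = g ∧ T ω ≤ (τ : ℝ≥0∞)) := by
  have hcg' : cnt (fun ω => G ω = g) ≠ 0 := ne_of_gt hcg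
  have hkey : ∀ (y : ℝ≥0) (ρ : ℝ≥0∞),
      cnt (fun ω => G ω = g ∧ (n0 ω = y ∧ T ω = ρ)) * cnt (fun ω => G ω = g)
        = cnt (fun ω => G ω = g ∧ n0 ω = y) * cnt (fun ω => G ω = g ∧ T ω = ρ) := by
    intro y ρ
    have h := hci y ρ
    unfold prC at h
    field_simp at h
    apply mul_right_cancel₀ hcg'
    linear_combination (cnt fun ω => G ω = g) * h
  -- decomposition of the big sum
  have hB : ∑ ω ∈ Finset.univ.filter (fun ω => G ω = g), (n0 ω : ℝ)
      = ∑ y ∈ Finset.univ.image n0, cnt (fun ω => G ω = g ∧ n0 ω = y) * (y : ℝ) := by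
    rw [fiber_sum (fun ω => (n0 ω : ℝ)) _ n0]
    apply Finset.sum_congr rfl
    intro y _
    have : ∑ ω ∈ Finset.univ.filter (fun ω => n0 ω = y ∧ G ω = g), (n0 ω : ℝ)
        = ∑ _ω ∈ Finset.univ.filter (fun ω => n0 ω = y ∧ G ω = g), (y : ℝ) := by
      apply Finset.sum_congr rfl
      intro ω hω
      rw [(Finset.mem_filter.mp hω).2.1]
    rw [this, sum_const_filter,
      cnt_congr (fun ω => n0 ω = y ∧ G ω = g) (fun ω => G ω = g ∧ n0 ω = y)
        (fun ω => and_comm)]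
  have hD : cnt (fun ω => G ω = g ∧ T ω ≤ (τ : ℝ≥0∞))
      = ∑ ρ ∈ Finset.univ.image T,
          (if ρ ≤ (τ : ℝ≥0∞) then cnt (fun ω => G ω = g ∧ T ω = ρ) else 0) := by
    have h1 : cnt (fun ω => G ω = g ∧ T ω ≤ (τ : ℝ≥0∞))
        = ∑ _ω ∈ Finset.univ.filter (fun ω => G ω = g ∧ T ω ≤ (τ : ℝ≥0∞)), (1:ℝ) := by
      rw [sum_const_filter, mul_one]
    rw [h1, fiber_sum (fun _ => (1:ℝ)) _ T]
    apply Finset.sum_congr rfl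
    intro ρ _
    rw [sum_const_filter, mul_one]
    by_cases hρ : ρ ≤ (τ : ℝ≥0∞)
    · rw [if_pos hρ]
      apply cnt_congr
      intro ω
      constructor
      · rintro ⟨h1, h2, -⟩
        exact ⟨h2, h1⟩
      · rintro ⟨h2, h1⟩
        exact ⟨h1, h2, h1 ▸ hρ⟩
    · rw [if_neg hρ]
      apply cnt_zero
      rintro ω ⟨h1, -, h3⟩
      exact hρ (h1 ▸ h3)
  have hA : (∑ ω ∈ Finset.univ.filter (fun ω => T ω ≤ (τ : ℝ≥0∞) ∧ G ω = g), (n0 ω : ℝ))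
        * cnt (fun ω => G ω = g)
      = ∑ y ∈ Finset.univ.image n0, ∑ ρ ∈ Finset.univ.image T,
          (cnt (fun ω => G ω = g ∧ n0 ω = y) * (y : ℝ))
            * (if ρ ≤ (τ : ℝ≥0∞) then cnt (fun ω => G ω = g ∧ T ω = ρ) else 0) := by
    rw [fiber_sum (fun ω => (n0 ω : ℝ)) _ n0, Finset.sum_mul]
    apply Finset.sum_congr rfl
    intro y _
    rw [fiber_sum (fun ω => (n0 ω : ℝ)) _ T, Finset.sum_mul]
    apply Finset.sum_congr rfl
    intro ρ _
    have hconst : ∑ ω ∈ Finset.univ.filter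
          (fun ω => T ω = ρ ∧ n0 ω = y ∧ T ω ≤ (τ : ℝ≥0∞) ∧ G ω = g), (n0 ω : ℝ)
        = ∑ _ω ∈ Finset.univ.filter
          (fun ω => T ω = ρ ∧ n0 ω = y ∧ T ω ≤ (τ : ℝ≥0∞) ∧ G ω = g), (y : ℝ) := by
      apply Finset.sum_congr rfl
      intro ω hω
      rw [(Finset.mem_filter.mp hω).2.2.1]
    rw [hconst, sum_const_filter]
    by_cases hρ : ρ ≤ (τ : ℝ≥0∞)
    · rw [if_pos hρ]
      have hc : cnt (fun ω => T ω = ρ ∧ n0 ω = y ∧ T ω ≤ (τ : ℝ≥0∞) ∧ G ω = g)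
          = cnt (fun ω => G ω = g ∧ (n0 ω = y ∧ T ω = ρ)) := by
        apply cnt_congr
        intro ω
        constructor
        · rintro ⟨h1, h2, -, h4⟩
          exact ⟨h4, h2, h1⟩
        · rintro ⟨h4, h2, h1⟩
          exact ⟨h1, h2, h1 ▸ hρ, h4⟩
      rw [hc]
      linear_combination (y : ℝ) * hkey y ρ
    · rw [if_neg hρ]
      have hc : cnt (fun ω => T ω = ρ ∧ n0 ω = y ∧ T ω ≤ (τ : ℝ≥0∞) ∧ G ω = g) = 0 := by
        apply cnt_zero
        rintro ω ⟨h1, -, h3, -⟩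
        exact hρ (h1 ▸ h3)
      rw [hc]
      ring
  rw [hA, hB, hD, Finset.sum_mul_sum]

end Aux

/-- suppression formula by severity.  `G : Ω → ℝ` is the severity
label (finite range, since `Ω` is finite).  Under the suppression hypothesis by
severity and conditional independence of `n⁰` and `T` given `G`,
`E(n) = Σ_g P(G = g)·E(n⁰ | G = g)·(1 − ξ·P(T ≤ τ | G = g))`, the sum running over the
finitely many values `g` attained by `G` (exactly those with `P(G = g) > 0`). -/
theorem statement_2 {Ω : Type*} [Fintype Ω] [Nonempty Ω]
    (n n0 : Ω → ℝ≥0) (T : Ω → ℝ≥0∞) (G : Ω → ℝ)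
    (ξ : ℝ) (hξ0 : 0 ≤ ξ) (hξ1 : ξ ≤ 1) (τ : ℝ≥0)
    (hsup : ∀ g : ℝ, 0 < pr (fun ω => G ω = g) →
      ∀ ρ : ℝ≥0∞, 0 < pr (fun ω => T ω = ρ ∧ G ω = g) →
        expecC (fun ω => T ω = ρ ∧ G ω = g) (fun ω => (n ω : ℝ)) =
          (1 - ξ * (if ρ ≤ (τ : ℝ≥0∞) then (1 : ℝ) else 0)) *
            expecC (fun ω => T ω = ρ ∧ G ω = g) (fun ω => (n0 ω : ℝ)))
    (hci : ∀ g : ℝ, 0 < pr (fun ω => G ω = g) →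
      ∀ (y : ℝ≥0) (ρ : ℝ≥0∞),
        prC (fun ω => G ω = g) (fun ω => n0 ω = y ∧ T ω = ρ) =
          prC (fun ω => G ω = g) (fun ω => n0 ω = y) *
            prC (fun ω => G ω = g) (fun ω => T ω = ρ)) :
    expec (fun ω => (n ω : ℝ)) =
      ∑ g ∈ Finset.univ.image G,
        pr (fun ω => G ω = g) *
          expecC (fun ω => G ω = g) (fun ω => (n0 ω : ℝ)) *
          (1 - ξ * prC (fun ω => G ω = g) (fun ω => T ω ≤ (τ : ℝ≥0∞))) := by
  classical
  have hNpos : (0:ℝ) < (Fintype.card Ω : ℝ) := by exact_mod_cast Fintype.card_pos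
  unfold expec
  rw [← Finset.sum_fiberwise_of_maps_to (g := G) (t := Finset.univ.image G)
      (fun ω _ => Finset.mem_image_of_mem G (Finset.mem_univ ω)) (fun ω => (n ω : ℝ)),
    Finset.sum_div]
  apply Finset.sum_congr rfl
  intro g hg
  obtain ⟨ω0, -, hω0⟩ := Finset.mem_image.mp hg
  have hcg : 0 < cnt (fun ω => G ω = g) := cnt_pos _ ω0 hω0
  have hprg : 0 < pr (fun ω => G ω = g) := div_pos hcg hNpos
  have h1 := claim1 n n0 T G ξ τ g (fun ρ h => hsup g hprg ρ h)
  have h2 := claim2 n0 T G τ g hcg (hci g hprg)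
  rw [h1]
  unfold pr expecC prC
  have hcg' : cnt (fun ω => G ω = g) ≠ 0 := ne_of_gt hcg
  have hN' : (Fintype.card Ω : ℝ) ≠ 0 := ne_of_gt hNpos
  field_simp
  linear_combination (-ξ) * h2
end

section
/- In the epidemic setting, let X : Ω → ℝ be any function, let t ∈ ℝ with Ω_t nonempty, and let x ∈ ℝ. Then #Ω_t · P_t({ω ∈ Ω_t : X(σ(ω)) = x}) = Σ_{τ > 0} Σ_{ω' ∈ Ω_{t−τ}, X(ω') = x} n^τ(ω'); equivalently, P_t(X̂_t = x) = Σ_{τ > 0} P_{t−τ}(X_{t−τ} = x)·E_{P_{t−τ}}(n^τ | X = x)·(#Ω_{t−τ}/#Ω_t), where X̂ = X ∘ σ and the sum runs over the finitely many τ > 0 for which the inner sum is nonzero (terms with P_{t−τ}(X = x) = 0 are understood to vanish). -/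
open Finset
open scoped Classical ENNReal NNReal

noncomputable section

variable {Ω : Type*} [Fintype Ω]

/-- `ninf tI σ τ ω` is the number of people infected by `ω` exactly at `ω`'s infectious
age `τ`: the number of `ω' ∈ Ω_{>0}` with `σ ω' = ω` and generation time `τ^σ ω' = τ`. -/
def ninf (tI : Ω → ℝ) (σ : Ω → Ω) (τ : ℝ) (ω : Ω) : ℝ :=
  cnt (fun ω' => 0 < tI ω' ∧ σ ω' = ω ∧ tI ω' - tI (σ ω') = τ)

/-- The (finitely many) positive times `τ` such that `Ω_{t-τ}` is nonempty. -/
def genTimes (tI : Ω → ℝ) (t : ℝ) : Finset ℝ :=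
  (Finset.univ.image (fun ω' => t - tI ω')).filter (fun τ => 0 < τ)

end

private lemma cnt_eq_sum_one {Ω : Type*} [Fintype Ω] (p : Ω → Prop) [DecidablePred p] :
    cnt p = ∑ _ω ∈ Finset.univ.filter p, (1 : ℝ) := by
  rw [Finset.sum_const, nsmul_eq_mul, mul_one, cnt]
  norm_cast
  exact congrArg Finset.card (by ext ω; simp)


/-- Epidemic setting: `tI` gives infection times, `σ` the infector
(meaningful on `Ω_{>0} = {ω : 0 < tI ω}`, where `tI (σ ω) < tI ω`).  For any `X : Ω → ℝ`,
`t` with `Ω_t` nonempty and `x : ℝ`: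
`#Ω_t · P_t(X̂_t = x) = Σ_{τ>0} Σ_{ω' ∈ Ω_{t−τ}, X ω' = x} n^τ(ω')`, and equivalently
`P_t(X̂_t = x) = Σ_{τ>0} P_{t−τ}(X = x)·E_{P_{t−τ}}(n^τ | X = x)·(#Ω_{t−τ}/#Ω_t)`,
where `X̂ = X ∘ σ` (defined on `Ω_{>0}`) and the sums run over the finitely many `τ > 0`
with `Ω_{t−τ}` nonempty (all other terms vanish). -/
theorem statement_4 {Ω : Type*} [Fintype Ω] (tI : Ω → ℝ) (σ : Ω → Ω)
    (hσ : ∀ ω, 0 < tI ω → tI (σ ω) < tI ω)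
    (X : Ω → ℝ) (t : ℝ)
    (hne : (Finset.univ.filter (fun ω => tI ω = t)).Nonempty) (x : ℝ) :
    cnt (fun ω => tI ω = t) *
        prC (fun ω => tI ω = t) (fun ω => 0 < tI ω ∧ X (σ ω) = x) =
      ∑ τ ∈ genTimes tI t,
        ∑ ω' ∈ Finset.univ.filter (fun ω' => tI ω' = t - τ ∧ X ω' = x),
          ninf tI σ τ ω'
    ∧
    prC (fun ω => tI ω = t) (fun ω => 0 < tI ω ∧ X (σ ω) = x) =
      ∑ τ ∈ genTimes tI t,
        prC (fun ω => tI ω = t - τ) (fun ω => X ω = x) *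
          expecC (fun ω => tI ω = t - τ ∧ X ω = x) (ninf tI σ τ) *
          (cnt (fun ω => tI ω = t - τ) / cnt (fun ω => tI ω = t)) := by
  have hcntC : cnt (Ω := Ω) (fun ω => tI ω = t) ≠ 0 := by
    have := Finset.card_pos.mpr hne
    rw [cnt_eq_sum_one]
    simp only [Finset.sum_const, nsmul_eq_mul, mul_one]
    positivity
  have first : cnt (fun ω => tI ω = t ∧ (0 < tI ω ∧ X (σ ω) = x)) =
      ∑ τ ∈ genTimes tI t,
        ∑ ω' ∈ Finset.univ.filter (fun ω' => tI ω' = t - τ ∧ X ω' = x),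
          ninf tI σ τ ω' := by
    rw [cnt_eq_sum_one]
    rw [← Finset.sum_fiberwise_of_maps_to (g := fun ω => t - tI (σ ω))
      (t := genTimes tI t) (by
        intro ω hω
        simp only [Finset.mem_filter, Finset.mem_univ, true_and] at hω
        obtain ⟨h1, h2, h3⟩ := hω
        have := hσ ω h2
        simp only [genTimes, Finset.mem_filter, Finset.mem_image, Finset.mem_univ, true_and]
        exact ⟨⟨σ ω, rfl⟩, by linarith⟩)]
    refine Finset.sum_congr rfl fun τ hτ => ?_
    rw [← Finset.sum_fiberwise_of_maps_to (g := σ)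
      (t := Finset.univ.filter (fun ω' => tI ω' = t - τ ∧ X ω' = x)) (by
        intro ω hω
        simp only [Finset.mem_filter, Finset.mem_univ, true_and] at hω ⊢
        obtain ⟨⟨h1, h2, h3⟩, h4⟩ := hω
        exact ⟨by linarith, h3⟩)]
    refine Finset.sum_congr rfl fun ω' hω' => ?_
    simp only [Finset.mem_filter, Finset.mem_univ, true_and] at hω'
    obtain ⟨h1, h2⟩ := hω'
    rw [ninf, cnt_eq_sum_one]
    refine Finset.sum_congr ?_ fun _ _ => rfl
    ext ω
    simp only [Finset.mem_filter, Finset.mem_univ, true_and]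
    constructor
    · rintro ⟨⟨⟨ht, hp, hx⟩, hτ'⟩, hs⟩
      exact ⟨hp, hs, by rw [hs]; linarith⟩
    · rintro ⟨hp, hs, hg⟩
      rw [hs] at hg
      refine ⟨⟨⟨by linarith, hp, by rw [hs, h2]⟩, by rw [hs]; linarith⟩, hs⟩
  have lhs1 : cnt (fun ω => tI ω = t) *
      prC (fun ω => tI ω = t) (fun ω => 0 < tI ω ∧ X (σ ω) = x) =
      ∑ τ ∈ genTimes tI t,
        ∑ ω' ∈ Finset.univ.filter (fun ω' => tI ω' = t - τ ∧ X ω' = x),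
          ninf tI σ τ ω' := by
    rw [prC, mul_comm, div_mul_cancel₀ _ hcntC]
    exact first
  refine ⟨lhs1, ?_⟩
  have hprC : prC (fun ω => tI ω = t) (fun ω => 0 < tI ω ∧ X (σ ω) = x)
      = (∑ τ ∈ genTimes tI t,
          ∑ ω' ∈ Finset.univ.filter (fun ω' => tI ω' = t - τ ∧ X ω' = x),
            ninf tI σ τ ω') / cnt (fun ω => tI ω = t) := by
    rw [← lhs1, mul_comm, mul_div_assoc, div_self hcntC, mul_one]
  rw [hprC, Finset.sum_div]
  refine Finset.sum_congr rfl fun τ hτ => ?_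
  have hD : cnt (fun ω => tI ω = t - τ) ≠ 0 := by
    simp only [genTimes, Finset.mem_filter, Finset.mem_image, Finset.mem_univ, true_and] at hτ
    obtain ⟨⟨ω₀, hω₀⟩, _⟩ := hτ
    have hmem : ω₀ ∈ Finset.univ.filter (fun ω => tI ω = t - τ) := by
      simp only [Finset.mem_filter, Finset.mem_univ, true_and]; linarith
    rw [cnt_eq_sum_one]
    simp only [Finset.sum_const, nsmul_eq_mul, mul_one, Ne, Nat.cast_eq_zero]
    exact Finset.card_ne_zero_of_mem hmem
  have hsumeq : (∑ ω ∈ Finset.univ.filter (fun ω => tI ω = t - τ ∧ X ω = x), ninf tI σ τ ω)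
      = ∑ ω' ∈ Finset.univ.filter (fun ω' => tI ω' = t - τ ∧ X ω' = x), ninf tI σ τ ω' :=
    Finset.sum_congr (by ext ω; simp) fun _ _ => rfl
  by_cases hDE : cnt (fun ω => tI ω = t - τ ∧ X ω = x) = 0
  · have h0 : Finset.univ.filter (fun ω' => tI ω' = t - τ ∧ X ω' = x) = ∅ := by
      rw [cnt_eq_sum_one] at hDE
      simp only [Finset.sum_const, nsmul_eq_mul, mul_one, Nat.cast_eq_zero,
        Finset.card_eq_zero] at hDE
      ext ω
      simp only [Finset.notMem_empty, iff_false, Finset.mem_filter, Finset.mem_univ, true_and]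
      intro hc
      have : ω ∈ (∅ : Finset Ω) := by
        rw [← hDE]; simp [hc]
      simp at this
    rw [prC]
    have h0' : cnt (fun ω => (fun ω => tI ω = t - τ) ω ∧ (fun ω => X ω = x) ω) = 0 := hDE
    rw [h0', h0]
    simp
  · have halg : ∀ (S a b c : ℝ), a ≠ 0 → b ≠ 0 → c ≠ 0 →
        b / a * (S / b) * (a / c) = S / c := by
      intro S a b c ha hb hc
      field_simp
    rw [prC, expecC]
    have h := halg (∑ ω' ∈ Finset.univ.filter (fun ω' => tI ω' = t - τ ∧ X ω' = x), ninf tI σ τ ω')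
      (cnt (fun ω => tI ω = t - τ)) (cnt (fun ω => tI ω = t - τ ∧ X ω = x))
      (cnt (fun ω => tI ω = t)) hD hDE hcntC
    rw [eq_comm]
    convert h using 3
    congr 1
    exact Finset.sum_congr (by ext ω; simp) fun _ _ => rfl
end

section
/- In the epidemic setting, let X : Ω → ℝ be any function, let t ∈ ℝ with Ω_t nonempty, and let x ∈ ℝ. Define X̌(ω) := X(σ(ω)) − τ^σ(ω) for ω ∈ Ω_{>0}. Then #Ω_t · P_t({ω ∈ Ω_t : X̌(ω) = x}) = Σ_{τ > 0} Σ_{ω' ∈ Ω_{t−τ}, X(ω') = x + τ} n^τ(ω'); equivalently, P_t(X̌_t = x) = Σ_{τ > 0} P_{t−τ}(X_{t−τ} = x + τ)·E_{P_{t−τ}}(n^τ | X = x + τ)·(#Ω_{t−τ}/#Ω_t), the sum running over the finitely many τ > 0 for which the inner sum is nonzero (terms with P_{t−τ}(X = x + τ) = 0 are understood to vanish). -/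
open Finset
open scoped Classical ENNReal NNReal

/-- Epidemic setting as in Statement 4.  With
`X̌(ω) := X(σ(ω)) − τ^σ(ω)` (defined on `Ω_{>0}`, where `τ^σ(ω) = tI ω − tI (σ ω)`):
`#Ω_t · P_t(X̌_t = x) = Σ_{τ>0} Σ_{ω' ∈ Ω_{t−τ}, X ω' = x+τ} n^τ(ω')`, and equivalently
`P_t(X̌_t = x) = Σ_{τ>0} P_{t−τ}(X = x+τ)·E_{P_{t−τ}}(n^τ | X = x+τ)·(#Ω_{t−τ}/#Ω_t)`,
the sums running over the finitely many `τ > 0` with `Ω_{t−τ}` nonempty. -/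
theorem statement_5 {Ω : Type*} [Fintype Ω] (tI : Ω → ℝ) (σ : Ω → Ω)
    (hσ : ∀ ω, 0 < tI ω → tI (σ ω) < tI ω)
    (X : Ω → ℝ) (t : ℝ)
    (hne : (Finset.univ.filter (fun ω => tI ω = t)).Nonempty) (x : ℝ) :
    cnt (fun ω => tI ω = t) *
        prC (fun ω => tI ω = t)
          (fun ω => 0 < tI ω ∧ X (σ ω) - (tI ω - tI (σ ω)) = x) =
      ∑ τ ∈ genTimes tI t,
        ∑ ω' ∈ Finset.univ.filter (fun ω' => tI ω' = t - τ ∧ X ω' = x + τ),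
          ninf tI σ τ ω'
    ∧
    prC (fun ω => tI ω = t)
        (fun ω => 0 < tI ω ∧ X (σ ω) - (tI ω - tI (σ ω)) = x) =
      ∑ τ ∈ genTimes tI t,
        prC (fun ω => tI ω = t - τ) (fun ω => X ω = x + τ) *
          expecC (fun ω => tI ω = t - τ ∧ X ω = x + τ) (ninf tI σ τ) *
          (cnt (fun ω => tI ω = t - τ) / cnt (fun ω => tI ω = t)) := by
  classical
  have hNpos : (0:ℝ) < cnt (fun ω => tI ω = t) := by
    simp only [cnt]
    exact_mod_cast Finset.card_pos.mpr hne
  have hN : cnt (fun ω => tI ω = t) ≠ 0 := ne_of_gt hNpos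
  have cnt_eq_sum : ∀ (E : Ω → Prop),
      cnt E = ∑ ω : Ω, if E ω then (1:ℝ) else 0 := by
    intro E
    simp [cnt, Finset.sum_boole]
  -- the key counting identity
  have key : cnt (fun ω => tI ω = t ∧ (0 < tI ω ∧ X (σ ω) - (tI ω - tI (σ ω)) = x)) =
      ∑ τ ∈ genTimes tI t,
        ∑ ω' ∈ Finset.univ.filter (fun ω' => tI ω' = t - τ ∧ X ω' = x + τ),
          ninf tI σ τ ω' := by
    have hRHS : ∀ ω'' : Ω,
        (∑ τ ∈ genTimes tI t, ∑ ω' : Ω,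
          if (tI ω' = t - τ ∧ X ω' = x + τ) ∧
             (0 < tI ω'' ∧ σ ω'' = ω' ∧ tI ω'' - tI (σ ω'') = τ) then (1:ℝ) else 0)
        = if tI ω'' = t ∧ (0 < tI ω'' ∧ X (σ ω'') - (tI ω'' - tI (σ ω'')) = x)
          then 1 else 0 := by
      intro ω''
      have step1 : ∀ τ : ℝ,
          (∑ ω' : Ω, if (tI ω' = t - τ ∧ X ω' = x + τ) ∧
              (0 < tI ω'' ∧ σ ω'' = ω' ∧ tI ω'' - tI (σ ω'') = τ) then (1:ℝ) else 0)
          = if (tI (σ ω'') = t - τ ∧ X (σ ω'') = x + τ) ∧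
              (0 < tI ω'' ∧ tI ω'' - tI (σ ω'') = τ) then 1 else 0 := by
        intro τ
        rw [Finset.sum_eq_single (σ ω'')]
        · refine if_congr ?_ rfl rfl
          constructor <;> (rintro ⟨h1, h2⟩; tauto)
        · intro b _ hb
          rw [if_neg]
          rintro ⟨_, _, h, _⟩
          exact hb h.symm
        · intro h; exact absurd (Finset.mem_univ _) h
      rw [Finset.sum_congr rfl (fun τ _ => step1 τ)]
      by_cases hP : tI ω'' = t ∧ (0 < tI ω'' ∧ X (σ ω'') - (tI ω'' - tI (σ ω'')) = x)
      · obtain ⟨ht, hpos, hX⟩ := hP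
        set τ0 := tI ω'' - tI (σ ω'') with hτ0
        have hτ0pos : 0 < τ0 := by
          have := hσ ω'' hpos; linarith
        have hmem : τ0 ∈ genTimes tI t := by
          simp only [genTimes, Finset.mem_filter, Finset.mem_image]
          exact ⟨⟨σ ω'', Finset.mem_univ _, by linarith⟩, hτ0pos⟩
        rw [Finset.sum_eq_single_of_mem τ0 hmem]
        · rw [if_pos, if_pos ⟨ht, hpos, hX⟩]
          refine ⟨⟨by linarith, by linarith⟩, hpos, rfl⟩
        · intro b _ hb
          rw [if_neg]
          rintro ⟨_, _, h⟩
          exact hb (by linarith)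
      · rw [if_neg hP]
        refine Finset.sum_eq_zero fun τ hτ => ?_
        rw [if_neg]
        rintro ⟨⟨h1, h2⟩, h3, h4⟩
        exact hP ⟨by linarith, h3, by linarith⟩
    calc cnt (fun ω => tI ω = t ∧ (0 < tI ω ∧ X (σ ω) - (tI ω - tI (σ ω)) = x))
        = ∑ ω'' : Ω, if tI ω'' = t ∧ (0 < tI ω'' ∧ X (σ ω'') - (tI ω'' - tI (σ ω'')) = x)
            then (1:ℝ) else 0 := by
          rw [cnt_eq_sum]
          exact Finset.sum_congr rfl fun ω _ => by congr
      _ = ∑ ω'' : Ω, ∑ τ ∈ genTimes tI t, ∑ ω' : Ω,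
            if (tI ω' = t - τ ∧ X ω' = x + τ) ∧
               (0 < tI ω'' ∧ σ ω'' = ω' ∧ tI ω'' - tI (σ ω'') = τ) then (1:ℝ) else 0 :=
          Finset.sum_congr rfl (fun ω'' _ => (hRHS ω'').symm)
      _ = ∑ τ ∈ genTimes tI t, ∑ ω'' : Ω, ∑ ω' : Ω,
            if (tI ω' = t - τ ∧ X ω' = x + τ) ∧
               (0 < tI ω'' ∧ σ ω'' = ω' ∧ tI ω'' - tI (σ ω'') = τ) then (1:ℝ) else 0 :=
          Finset.sum_comm
      _ = ∑ τ ∈ genTimes tI t, ∑ ω' : Ω, ∑ ω'' : Ω,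
            if (tI ω' = t - τ ∧ X ω' = x + τ) ∧
               (0 < tI ω'' ∧ σ ω'' = ω' ∧ tI ω'' - tI (σ ω'') = τ) then (1:ℝ) else 0 :=
          Finset.sum_congr rfl (fun τ _ => Finset.sum_comm)
      _ = ∑ τ ∈ genTimes tI t,
            ∑ ω' ∈ Finset.univ.filter (fun ω' => tI ω' = t - τ ∧ X ω' = x + τ),
              ninf tI σ τ ω' := by
          refine Finset.sum_congr rfl fun τ _ => ?_
          rw [Finset.sum_filter]
          refine Finset.sum_congr rfl fun ω' _ => ?_
          rw [ninf, cnt_eq_sum]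
          by_cases hA : tI ω' = t - τ ∧ X ω' = x + τ
          · rw [if_pos hA]
            exact Finset.sum_congr rfl fun ω'' _ => by simp only [hA, true_and]; congr
          · rw [if_neg hA]
            exact Finset.sum_eq_zero fun ω'' _ => if_neg (fun h => hA h.1)
  have eq1 : cnt (fun ω => tI ω = t) *
      prC (fun ω => tI ω = t)
        (fun ω => 0 < tI ω ∧ X (σ ω) - (tI ω - tI (σ ω)) = x) =
      ∑ τ ∈ genTimes tI t,
        ∑ ω' ∈ Finset.univ.filter (fun ω' => tI ω' = t - τ ∧ X ω' = x + τ),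
          ninf tI σ τ ω' := by
    rw [prC, mul_div_cancel₀ _ hN]
    exact key
  refine ⟨eq1, ?_⟩
  -- second part: each term equals (∑ ninf) / cnt (tI = t)
  have term_eq : ∀ τ : ℝ,
      prC (fun ω => tI ω = t - τ) (fun ω => X ω = x + τ) *
        expecC (fun ω => tI ω = t - τ ∧ X ω = x + τ) (ninf tI σ τ) *
        (cnt (fun ω => tI ω = t - τ) / cnt (fun ω => tI ω = t)) =
      (∑ ω' ∈ Finset.univ.filter (fun ω' => tI ω' = t - τ ∧ X ω' = x + τ),
          ninf tI σ τ ω') / cnt (fun ω => tI ω = t) := by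
    intro τ
    rw [prC, expecC]
    set a := cnt (fun ω : Ω => tI ω = t - τ ∧ X ω = x + τ) with ha
    set c := cnt (fun ω : Ω => tI ω = t - τ) with hc
    set s := ∑ ω' ∈ Finset.univ.filter (fun ω' : Ω => tI ω' = t - τ ∧ X ω' = x + τ),
        ninf tI σ τ ω' with hs
    have hcnt_empty : ∀ (E : Ω → Prop), cnt E = 0 →
        ∀ ω : Ω, ¬ E ω := by
      intro E hE ω hω
      have h0 : (Finset.univ.filter E).card = 0 := by
        have := hE; rw [cnt] at this; exact_mod_cast this
      have : ω ∈ Finset.univ.filter E := Finset.mem_filter.mpr ⟨Finset.mem_univ _, hω⟩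
      rw [Finset.card_eq_zero.mp h0] at this
      exact absurd this (Finset.notMem_empty _)
    by_cases haz : a = 0
    · have hs0 : s = 0 := by
        rw [hs]
        refine Finset.sum_eq_zero fun ω' hω' => ?_
        exact absurd (Finset.mem_filter.mp hω').2 (hcnt_empty _ haz ω')
      rw [haz, hs0]
      simp
    · have hcnt_exists : ∀ (E : Ω → Prop), cnt E ≠ 0 → ∃ ω : Ω, E ω := by
        intro E hE
        by_contra h
        push_neg at h
        apply hE
        rw [cnt, Finset.filter_false_of_mem (fun ω _ => h ω)]
        simp
      have hcz : c ≠ 0 := by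
        intro hc0
        obtain ⟨ω0, hω0⟩ := hcnt_exists _ haz
        exact hcnt_empty _ hc0 ω0 hω0.1
      have algebra : ∀ a c s N : ℝ, a ≠ 0 → c ≠ 0 →
          a / c * (s / a) * (c / N) = s / N := by
        intro a c s N ha hc
        rcases eq_or_ne N 0 with hN0 | hN0
        · simp [hN0]
        · field_simp
      convert algebra a c s _ haz hcz using 4
      rw [hs]
      exact Finset.sum_congr (by congr) fun _ _ => rfl
  rw [Finset.sum_congr rfl (fun τ _ => term_eq τ), ← Finset.sum_div, ← key, prC]
end

section
/- In the epidemic setting, fix t ∈ ℝ and define the set of infector–infectee pairs with infector infected at t: Ω̃_t = {(ω', ω) : ω ∈ Ω_{>0}, σ(ω) = ω', t^I(ω') = t}, with generation time τ^C(ω', ω) = t^I(ω) − t^I(ω'). Assume Ω̃_t is nonempty (so Ω_t is nonempty and R_t > 0), and let P̃_t be the uniform probability measure on Ω̃_t. Then for every τ ∈ [0,∞), P̃_t(τ^C ≤ τ) = B_t(τ)/R_t, where B_t(τ) = E_{P_t}(N^τ) and R_t = E_{P_t}(N^∞). In particular #Ω̃_t = #Ω_t · R_t. -/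
open Finset
open scoped Classical ENNReal NNReal

lemma card_filter_iff {α : Type*} [Fintype α] {p q : α → Prop}
    [DecidablePred p] [DecidablePred q] (h : ∀ x, p x ↔ q x) :
    (Finset.univ.filter p).card = (Finset.univ.filter q).card :=
  congrArg Finset.card (Finset.filter_congr fun x _ => h x)

lemma cnt_eq_s7 {Ω : Type*} [Fintype Ω] {E F : Ω → Prop} [DecidablePred F]
    (h : ∀ x, E x ↔ F x) : cnt E = ((Finset.univ.filter F).card : ℝ) := by
  unfold cnt
  exact_mod_cast card_filter_iff h

lemma key_pair {Ω : Type*} [Fintype Ω] (tI : Ω → ℝ) (t : ℝ) (Q : Ω → Ω → Prop)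
    [DecidablePred fun p : Ω × Ω => Q p.1 p.2]
    [DecidablePred fun ω : Ω => tI ω = t]
    [∀ a, DecidablePred (Q a)]
    (hQ : ∀ a b, Q a b → tI a = t) :
    (Finset.univ.filter fun p : Ω × Ω => Q p.1 p.2).card
      = ∑ a ∈ Finset.univ.filter (fun ω => tI ω = t),
          (Finset.univ.filter fun b => Q a b).card := by
  classical
  rw [Finset.card_filter, Fintype.sum_prod_type, Finset.sum_filter]
  refine Finset.sum_congr rfl (fun a _ => ?_)
  by_cases h : tI a = t
  · rw [if_pos h, Finset.card_filter]
  · rw [if_neg h]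
    exact Finset.sum_eq_zero fun b _ => by
      simp only [ite_eq_right_iff]
      intro hq; exact absurd (hQ a b hq) h

/-- generation time distribution on infector–infectee pairs.
`Ω̃_t` is the set of infector–infectee pairs `(ω', ω)` with the infector `ω'` infected
at `t`; `τ^C(ω', ω) = tI ω − tI ω'`.  If `Ω̃_t` is nonempty then, with `P̃_t` the
uniform measure on `Ω̃_t`, for every `τ ∈ [0,∞)` one has
`P̃_t(τ^C ≤ τ) = B_t(τ)/R_t` where `B_t(τ) = E_{P_t}(N^τ)` and `R_t = E_{P_t}(N^∞)`;
in particular `#Ω̃_t = #Ω_t · R_t`. -/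
theorem statement_7 {Ω : Type*} [Fintype Ω] (tI : Ω → ℝ) (σ : Ω → Ω)
    (hσ : ∀ ω, 0 < tI ω → tI (σ ω) < tI ω) (t : ℝ)
    (hne : (Finset.univ.filter (fun p : Ω × Ω =>
        0 < tI p.2 ∧ σ p.2 = p.1 ∧ tI p.1 = t)).Nonempty) :
    (∀ τ : ℝ, 0 ≤ τ →
      ((Finset.univ.filter (fun p : Ω × Ω =>
            (0 < tI p.2 ∧ σ p.2 = p.1 ∧ tI p.1 = t) ∧ tI p.2 - tI p.1 ≤ τ)).card : ℝ) /
          ((Finset.univ.filter (fun p : Ω × Ω =>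
            0 < tI p.2 ∧ σ p.2 = p.1 ∧ tI p.1 = t)).card : ℝ) =
        expecC (fun ω => tI ω = t)
            (fun ω => cnt (fun ω' => 0 < tI ω' ∧ σ ω' = ω ∧ tI ω' - tI ω ≤ τ)) /
          expecC (fun ω => tI ω = t)
            (fun ω => cnt (fun ω' => 0 < tI ω' ∧ σ ω' = ω)))
    ∧
    ((Finset.univ.filter (fun p : Ω × Ω =>
        0 < tI p.2 ∧ σ p.2 = p.1 ∧ tI p.1 = t)).card : ℝ) =
      cnt (fun ω => tI ω = t) *
        expecC (fun ω => tI ω = t)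
          (fun ω => cnt (fun ω' => 0 < tI ω' ∧ σ ω' = ω)) := by
    classical
  have hc : (0:ℝ) < cnt (fun ω => tI ω = t) := by
    obtain ⟨p, hp⟩ := hne
    have h1 : p.1 ∈ Finset.univ.filter (fun ω => tI ω = t) := by
      simp only [Finset.mem_filter, Finset.mem_univ, true_and]
      exact ((Finset.mem_filter.mp hp).2).2.2
    rw [cnt_eq_s7 (F := fun ω => tI ω = t) (fun x => Iff.rfl)]
    exact_mod_cast Finset.card_pos.mpr ⟨p.1, h1⟩
  have hDpos : (0:ℝ) < ((Finset.univ.filter (fun p : Ω × Ω =>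
      0 < tI p.2 ∧ σ p.2 = p.1 ∧ tI p.1 = t)).card : ℝ) := by
    exact_mod_cast Finset.card_pos.mpr hne
  have hD : ((Finset.univ.filter (fun p : Ω × Ω =>
      0 < tI p.2 ∧ σ p.2 = p.1 ∧ tI p.1 = t)).card : ℝ)
      = ∑ a ∈ Finset.univ.filter (fun ω => tI ω = t),
          cnt (fun b => 0 < tI b ∧ σ b = a) := by
    rw [key_pair tI t (fun a b => 0 < tI b ∧ σ b = a ∧ tI a = t) (fun a b h => h.2.2)]
    push_cast
    refine Finset.sum_congr rfl (fun a ha => ?_)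
    have hat : tI a = t := (Finset.mem_filter.mp ha).2
    symm
    exact cnt_eq_s7 fun b => by simp [hat]
  have hRden : expecC (fun ω => tI ω = t) (fun ω => cnt (fun ω' => 0 < tI ω' ∧ σ ω' = ω))
      = ((Finset.univ.filter (fun p : Ω × Ω =>
          0 < tI p.2 ∧ σ p.2 = p.1 ∧ tI p.1 = t)).card : ℝ) / cnt (fun ω => tI ω = t) := by
    unfold expecC
    rw [hD]
  constructor
  · intro τ hτ
    have hNum : ((Finset.univ.filter (fun p : Ω × Ω =>
        (0 < tI p.2 ∧ σ p.2 = p.1 ∧ tI p.1 = t) ∧ tI p.2 - tI p.1 ≤ τ)).card : ℝ)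
        = ∑ a ∈ Finset.univ.filter (fun ω => tI ω = t),
            cnt (fun b => 0 < tI b ∧ σ b = a ∧ tI b - tI a ≤ τ) := by
      rw [key_pair tI t
        (fun a b => (0 < tI b ∧ σ b = a ∧ tI a = t) ∧ tI b - tI a ≤ τ)
        (fun a b h => h.1.2.2)]
      push_cast
      refine Finset.sum_congr rfl (fun a ha => ?_)
      have hat : tI a = t := (Finset.mem_filter.mp ha).2
      symm
      refine cnt_eq_s7 fun b => ?_
      constructor
      · rintro ⟨h1, h2, h3⟩; exact ⟨⟨h1, h2, hat⟩, h3⟩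
      · rintro ⟨⟨h1, h2, _⟩, h3⟩; exact ⟨h1, h2, h3⟩
    have hRnum : expecC (fun ω => tI ω = t)
        (fun ω => cnt (fun ω' => 0 < tI ω' ∧ σ ω' = ω ∧ tI ω' - tI ω ≤ τ))
        = ((Finset.univ.filter (fun p : Ω × Ω =>
            (0 < tI p.2 ∧ σ p.2 = p.1 ∧ tI p.1 = t) ∧ tI p.2 - tI p.1 ≤ τ)).card : ℝ)
          / cnt (fun ω => tI ω = t) := by
      unfold expecC
      rw [hNum]
    rw [hRnum, hRden]
    rw [div_div_div_cancel_right₀]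
    exact ne_of_gt hc
  · rw [hRden, mul_div_cancel₀ _ (ne_of_gt hc)]
end

section
/- In the epidemic setting with severity, let t ∈ ℝ with Ω_t nonempty, let τ > 0 and let g be in the range of G. Then #Ω_t · P_t(τ^σ_t = τ, Ĝ_t = g) = Σ_{ω' ∈ Ω_{t−τ,g}} n^τ(ω'); equivalently, if Ω_{t−τ,g} is nonempty, P_t(τ^σ_t = τ, Ĝ_t = g) = E_{P_{t−τ,g}}(n^τ) · (#Ω_{t−τ,g}/#Ω_t), i.e. the probability that an individual infected at t has an infector who was infected at time t − τ and has severity g equals the average over Ω_{t−τ,g} of the number of people infected at infectious age τ, weighted by #Ω_{t−τ,g}/#Ω_t. -/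
open Finset
open scoped Classical ENNReal NNReal

/-- joint distribution of generation time and infector's severity.
Epidemic setting with severity `G : Ω → ℝ`, `Ĝ = G ∘ σ` on `Ω_{>0}`; for `τ > 0` and
`g` in the range of `G`:
`#Ω_t · P_t(τ^σ_t = τ, Ĝ_t = g) = Σ_{ω' ∈ Ω_{t−τ,g}} n^τ(ω')`, and equivalently, if
`Ω_{t−τ,g}` is nonempty,
`P_t(τ^σ_t = τ, Ĝ_t = g) = E_{P_{t−τ,g}}(n^τ) · (#Ω_{t−τ,g}/#Ω_t)`. -/
theorem statement_8 {Ω : Type*} [Fintype Ω] (tI : Ω → ℝ) (σ : Ω → Ω)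
    (hσ : ∀ ω, 0 < tI ω → tI (σ ω) < tI ω)
    (G : Ω → ℝ) (t : ℝ)
    (hne : (Finset.univ.filter (fun ω => tI ω = t)).Nonempty)
    (τ : ℝ) (hτ : 0 < τ) (g : ℝ) (hg : ∃ ω, G ω = g) :
    cnt (fun ω => tI ω = t) *
        prC (fun ω => tI ω = t)
          (fun ω => 0 < tI ω ∧ tI ω - tI (σ ω) = τ ∧ G (σ ω) = g) =
      ∑ ω' ∈ Finset.univ.filter (fun ω' => tI ω' = t - τ ∧ G ω' = g),
        ninf tI σ τ ω'
    ∧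
    ((Finset.univ.filter (fun ω' => tI ω' = t - τ ∧ G ω' = g)).Nonempty →
      prC (fun ω => tI ω = t)
          (fun ω => 0 < tI ω ∧ tI ω - tI (σ ω) = τ ∧ G (σ ω) = g) =
        expecC (fun ω => tI ω = t - τ ∧ G ω = g) (ninf tI σ τ) *
          (cnt (fun ω => tI ω = t - τ ∧ G ω = g) / cnt (fun ω => tI ω = t))) := by
  classical
  set S := Finset.univ.filter (fun ω' => tI ω' = t - τ ∧ G ω' = g) with hS
  have hA : cnt (Ω := Ω) (fun ω => tI ω = t) ≠ 0 := by
    simp only [cnt, ne_eq, Nat.cast_eq_zero, Finset.card_eq_zero]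
    exact fun h => hne.ne_empty h
  have hnat : (Finset.univ.filter
        (fun ω => tI ω = t ∧ 0 < tI ω ∧ tI ω - tI (σ ω) = τ ∧ G (σ ω) = g)).card
      = ∑ ω' ∈ S, (Finset.univ.filter
          (fun ω'' => 0 < tI ω'' ∧ σ ω'' = ω' ∧ tI ω'' - tI (σ ω'') = τ)).card := by
    rw [Finset.card_eq_sum_card_fiberwise (f := σ) (t := S) ?_]
    · refine Finset.sum_congr rfl fun ω' hω' => ?_
      congr 1
      rw [Finset.filter_filter]
      apply Finset.filter_congr
      intro ω _
      simp only [hS, Finset.mem_filter, Finset.mem_univ, true_and] at hω'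
      constructor
      · rintro ⟨⟨h1, h2, h3, h4⟩, h5⟩
        exact ⟨h2, h5, h3⟩
      · rintro ⟨h2, h5, h3⟩
        have ht : tI ω = t := by rw [h5] at h3; have := hω'.1; linarith
        exact ⟨⟨ht, h2, h3, by rw [h5, hω'.2]⟩, h5⟩
    · intro ω hω
      simp only [Finset.mem_coe, Finset.mem_filter, Finset.mem_univ, true_and] at hω
      simp only [hS, Finset.mem_coe, Finset.mem_filter, Finset.mem_univ, true_and]
      obtain ⟨h1, h2, h3, h4⟩ := hω
      exact ⟨by linarith, h4⟩
  have key : cnt (fun ω => tI ω = t ∧ 0 < tI ω ∧ tI ω - tI (σ ω) = τ ∧ G (σ ω) = g)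
      = ∑ ω' ∈ S, ninf tI σ τ ω' := by
    unfold cnt ninf cnt
    rw [← Nat.cast_sum]
    exact_mod_cast congrArg (Nat.cast : ℕ → ℝ) hnat
  have hprC : prC (fun ω => tI ω = t)
      (fun ω => 0 < tI ω ∧ tI ω - tI (σ ω) = τ ∧ G (σ ω) = g)
      = (∑ ω' ∈ S, ninf tI σ τ ω') / cnt (fun ω => tI ω = t) := by
    rw [prC, key.symm]
  constructor
  · rw [hprC, mul_div_cancel₀ _ hA]
  · intro hSne
    have hcS : cnt (Ω := Ω) (fun ω => tI ω = t - τ ∧ G ω = g) ≠ 0 := by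
      simp only [cnt, ne_eq, Nat.cast_eq_zero, Finset.card_eq_zero]
      intro h
      apply hSne.ne_empty
      rw [hS, ← h]
      congr
    rw [hprC, expecC]
    field_simp
    rw [hS]
    congr
end

section
/- In the epidemic setting, let t ∈ ℝ with Ω_t nonempty and let τ > 0. Then #Ω_t · P_t(τ^σ_t = τ) = Σ_{ω' ∈ Ω_{t−τ}} n^τ(ω'); equivalently, if Ω_{t−τ} is nonempty, P_t(τ^σ_t = τ) = (#Ω_{t−τ}/#Ω_t) · E_{P_{t−τ}}(n^τ): the probability that the infector of an individual infected at t was infected at time t − τ equals the mean number of people infected at infectious age τ by individuals infected at t − τ, times #Ω_{t−τ}/#Ω_t. -/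
open Finset
open scoped Classical ENNReal NNReal

/-- distribution of the generation time.  Epidemic setting; `τ > 0`:
`#Ω_t · P_t(τ^σ_t = τ) = Σ_{ω' ∈ Ω_{t−τ}} n^τ(ω')`, and equivalently, if `Ω_{t−τ}` is
nonempty, `P_t(τ^σ_t = τ) = (#Ω_{t−τ}/#Ω_t) · E_{P_{t−τ}}(n^τ)`. -/
theorem statement_9 {Ω : Type*} [Fintype Ω] (tI : Ω → ℝ) (σ : Ω → Ω)
    (hσ : ∀ ω, 0 < tI ω → tI (σ ω) < tI ω) (t : ℝ)
    (hne : (Finset.univ.filter (fun ω => tI ω = t)).Nonempty)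
    (τ : ℝ) (hτ : 0 < τ) :
    cnt (fun ω => tI ω = t) *
        prC (fun ω => tI ω = t) (fun ω => 0 < tI ω ∧ tI ω - tI (σ ω) = τ) =
      ∑ ω' ∈ Finset.univ.filter (fun ω' => tI ω' = t - τ), ninf tI σ τ ω'
    ∧
    ((Finset.univ.filter (fun ω' => tI ω' = t - τ)).Nonempty →
      prC (fun ω => tI ω = t) (fun ω => 0 < tI ω ∧ tI ω - tI (σ ω) = τ) =
        (cnt (fun ω => tI ω = t - τ) / cnt (fun ω => tI ω = t)) *
          expecC (fun ω => tI ω = t - τ) (ninf tI σ τ)) := by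
  classical
  have hct : cnt (fun ω => tI ω = t) ≠ 0 := by
    have := Finset.card_pos.mpr hne
    simp only [cnt]
    exact_mod_cast this.ne'
  have key : cnt (fun ω => tI ω = t ∧ 0 < tI ω ∧ tI ω - tI (σ ω) = τ) =
      ∑ ω' ∈ Finset.univ.filter (fun ω' => tI ω' = t - τ), ninf tI σ τ ω' := by
    simp only [ninf, cnt, Finset.card_filter]
    push_cast
    rw [Finset.sum_comm]
    refine Finset.sum_congr rfl fun ω _ => ?_
    have h1 : ∀ ω' : Ω,
        (if 0 < tI ω ∧ σ ω = ω' ∧ tI ω - tI (σ ω) = τ then (1:ℝ) else 0) =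
        if σ ω = ω' then (if 0 < tI ω ∧ tI ω - tI (σ ω) = τ then (1:ℝ) else 0) else 0 := by
      intro ω'; split_ifs <;> tauto
    simp only [h1, Finset.sum_ite_eq, Finset.mem_filter, Finset.mem_univ, true_and]
    by_cases h2 : tI (σ ω) = t - τ <;> simp [h2]
    · split_ifs with ha hb hc
      · rfl
      · exact absurd ⟨ha.2.1, ha.2.2⟩ hb
      · exact absurd ⟨by linarith [hc.2], hc.1, hc.2⟩ ha
      · rfl
    · intro ha hb hc
      exact h2 (by linarith)
  constructor
  · rw [prC, mul_div_assoc', mul_comm, mul_div_assoc, div_self hct, mul_one]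
    exact key
  · intro hne'
    have hct' : cnt (fun ω => tI ω = t - τ) ≠ 0 := by
      have := Finset.card_pos.mpr hne'
      simp only [cnt]
      exact_mod_cast this.ne'
    rw [prC, key, expecC]
    field_simp
end

section
/- In the epidemic setting, for every t ∈ ℝ such that every individual infected at t has an infector (i.e. Ω_t ⊆ Ω_{>0}, in particular t > 0), one has #Ω_t = Σ_{τ > 0} Σ_{ω' ∈ Ω_{t−τ}} n^τ(ω'); equivalently, #Ω_t = Σ_{τ > 0} #Ω_{t−τ} · E_{P_{t−τ}}(n^τ_{t−τ}), where the sum runs over the finitely many τ > 0 with Ω_{t−τ} nonempty: the number of individuals infected at time t is determined by the numbers infected at earlier times and their mean infection counts at each infectious age. -/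
open Finset
open scoped Classical ENNReal NNReal

/-- the number of newly infected individuals is determined by the
past.  Epidemic setting; if every individual infected at `t` has an infector
(`Ω_t ⊆ Ω_{>0}`, in particular `t > 0` whenever `Ω_t ≠ ∅`), then
`#Ω_t = Σ_{τ>0} Σ_{ω' ∈ Ω_{t−τ}} n^τ(ω')`, and equivalently
`#Ω_t = Σ_{τ>0} #Ω_{t−τ} · E_{P_{t−τ}}(n^τ)`, the sums running over the finitely many
`τ > 0` with `Ω_{t−τ}` nonempty. -/
theorem statement_10 {Ω : Type*} [Fintype Ω] (tI : Ω → ℝ) (σ : Ω → Ω)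
    (hσ : ∀ ω, 0 < tI ω → tI (σ ω) < tI ω) (t : ℝ)
    (ht : ∀ ω, tI ω = t → 0 < tI ω) :
    cnt (fun ω => tI ω = t) =
      ∑ τ ∈ genTimes tI t,
        ∑ ω' ∈ Finset.univ.filter (fun ω' => tI ω' = t - τ), ninf tI σ τ ω'
    ∧
    cnt (fun ω => tI ω = t) =
      ∑ τ ∈ genTimes tI t,
        cnt (fun ω => tI ω = t - τ) *
          expecC (fun ω => tI ω = t - τ) (ninf tI σ τ) := by
  classical
  have key : cnt (fun ω => tI ω = t) =
      ∑ τ ∈ genTimes tI t,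
        ∑ ω' ∈ Finset.univ.filter (fun ω' => tI ω' = t - τ), ninf tI σ τ ω' := by
    have h1 : (Finset.univ.filter (fun ω : Ω => tI ω = t)).card =
        ∑ τ ∈ genTimes tI t,
          ((Finset.univ.filter (fun ω : Ω => tI ω = t)).filter
            (fun ω => t - tI (σ ω) = τ)).card := by
      apply Finset.card_eq_sum_card_fiberwise
      intro ω hω
      simp only [Finset.mem_coe, Finset.mem_filter, Finset.mem_univ, true_and] at hω
      have h0 := ht ω hω
      have h2 := hσ ω h0
      simp only [Finset.mem_coe, genTimes, Finset.mem_filter, Finset.mem_image, Finset.mem_univ, true_and]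
      exact ⟨⟨σ ω, rfl⟩, by rw [hω] at h2; linarith⟩
    have h2 : ∀ τ ∈ genTimes tI t,
        (((Finset.univ.filter (fun ω : Ω => tI ω = t)).filter
            (fun ω => t - tI (σ ω) = τ)).card : ℝ) =
        ∑ ω' ∈ Finset.univ.filter (fun ω' => tI ω' = t - τ), ninf tI σ τ ω' := by
      intro τ hτ
      have hτpos : 0 < τ := by
        simp only [genTimes, Finset.mem_filter] at hτ; exact hτ.2
      have h3 : ((Finset.univ.filter (fun ω : Ω => tI ω = t)).filter
            (fun ω => t - tI (σ ω) = τ)).card =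
          ∑ ω' ∈ Finset.univ.filter (fun ω' => tI ω' = t - τ),
            (((Finset.univ.filter (fun ω : Ω => tI ω = t)).filter
              (fun ω => t - tI (σ ω) = τ)).filter (fun ω => σ ω = ω')).card := by
        apply Finset.card_eq_sum_card_fiberwise
        intro ω hω
        simp only [Finset.mem_coe, Finset.mem_filter, Finset.mem_univ, true_and] at hω ⊢
        linarith [hω.2]
      rw [h3]
      push_cast
      apply Finset.sum_congr rfl
      intro ω' hω'
      simp only [Finset.mem_filter, Finset.mem_univ, true_and] at hω'
      unfold ninf cnt
      congr 2
      rw [Finset.filter_filter, Finset.filter_filter]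
      ext ω
      simp only [Finset.mem_filter, Finset.mem_univ, true_and]
      constructor
      · rintro ⟨h1', h2', h3'⟩
        refine ⟨ht ω h1', h3', ?_⟩
        rw [h3', hω', h1']; ring
      · rintro ⟨hp, hs, hd⟩
        rw [hs, hω'] at hd
        exact ⟨by linarith, by rw [hs, hω']; linarith, hs⟩
    unfold cnt
    rw [h1]
    push_cast
    exact Finset.sum_congr rfl h2
  refine ⟨key, key.trans (Finset.sum_congr rfl ?_)⟩
  intro τ _
  unfold expecC
  by_cases hc : cnt (fun ω : Ω => tI ω = t - τ) = 0
  · have hemp : (Finset.univ.filter (fun ω : Ω => tI ω = t - τ)) = ∅ := by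
      unfold cnt at hc
      exact Finset.card_eq_zero.mp (by exact_mod_cast hc)
    rw [hemp, hc]
    simp
  · field_simp
end

section
/- In the epidemic setting with severity and app usage, let t ∈ ℝ with Ω_t nonempty, let τ > 0, let g be in the range of G, and let a ∈ {app, no app}. Then #Ω_t · P_t(τ^σ_t = τ, Ĝ_t = g, Â_t = a) = Σ_{ω' ∈ Ω_{t−τ,g,a}} n^τ(ω'); equivalently, if Ω_{t−τ,g,a} is nonempty, P_t(τ^σ_t = τ, Ĝ_t = g, Â_t = a) = E_{P_{t−τ,g,a}}(n^τ) · (#Ω_{t−τ,g,a}/#Ω_t). -/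
open Finset
open scoped Classical ENNReal NNReal

/-- Whether or not an individual uses the contact-tracing app. -/
inductive AppUse : Type
  | app : AppUse
  | noapp : AppUse
  deriving DecidableEq

instance : Fintype AppUse :=
  ⟨{AppUse.app, AppUse.noapp}, fun x => by cases x <;> simp⟩


lemma cnt_ne_zero' {Ω : Type*} [Fintype Ω] {E : Ω → Prop} (h : ∃ ω, E ω) :
    cnt E ≠ 0 := by
  obtain ⟨ω, hω⟩ := h
  simp only [cnt, Ne, Nat.cast_eq_zero, Finset.card_eq_zero]
  intro hc
  have : ω ∈ Finset.univ.filter E := Finset.mem_filter.mpr ⟨Finset.mem_univ _, hω⟩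
  rw [hc] at this
  exact absurd this (Finset.notMem_empty _)

/-- joint distribution of generation time, infector's severity and
infector's app usage.  Epidemic setting with severity `G` and app usage `A`;
`Ĝ = G ∘ σ`, `Â = A ∘ σ` on `Ω_{>0}`.  For `τ > 0`, `g` in the range of `G` and
`a ∈ {app, no app}`:
`#Ω_t · P_t(τ^σ_t = τ, Ĝ_t = g, Â_t = a) = Σ_{ω' ∈ Ω_{t−τ,g,a}} n^τ(ω')`, and
equivalently, if `Ω_{t−τ,g,a}` is nonempty,
`P_t(τ^σ_t = τ, Ĝ_t = g, Â_t = a) = E_{P_{t−τ,g,a}}(n^τ) · (#Ω_{t−τ,g,a}/#Ω_t)`. -/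
theorem statement_14 {Ω : Type*} [Fintype Ω] (tI : Ω → ℝ) (σ : Ω → Ω)
    (hσ : ∀ ω, 0 < tI ω → tI (σ ω) < tI ω)
    (G : Ω → ℝ) (A : Ω → AppUse) (t : ℝ)
    (hne : (Finset.univ.filter (fun ω => tI ω = t)).Nonempty)
    (τ : ℝ) (hτ : 0 < τ) (g : ℝ) (hg : ∃ ω, G ω = g) (a : AppUse) :
    cnt (fun ω => tI ω = t) *
        prC (fun ω => tI ω = t)
          (fun ω => 0 < tI ω ∧ tI ω - tI (σ ω) = τ ∧ G (σ ω) = g ∧ A (σ ω) = a) =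
      ∑ ω' ∈ Finset.univ.filter (fun ω' => tI ω' = t - τ ∧ G ω' = g ∧ A ω' = a),
        ninf tI σ τ ω'
    ∧
    ((Finset.univ.filter (fun ω' => tI ω' = t - τ ∧ G ω' = g ∧ A ω' = a)).Nonempty →
      prC (fun ω => tI ω = t)
          (fun ω => 0 < tI ω ∧ tI ω - tI (σ ω) = τ ∧ G (σ ω) = g ∧ A (σ ω) = a) =
        expecC (fun ω => tI ω = t - τ ∧ G ω = g ∧ A ω = a) (ninf tI σ τ) *
          (cnt (fun ω => tI ω = t - τ ∧ G ω = g ∧ A ω = a) /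
            cnt (fun ω => tI ω = t))) := by
  classical
  have hCcard : cnt (fun ω : Ω => tI ω = t) ≠ 0 := by
    obtain ⟨ω, hω⟩ := hne
    exact cnt_ne_zero' ⟨ω, (Finset.mem_filter.mp hω).2⟩
  have key : cnt (fun ω => (tI ω = t) ∧
      (0 < tI ω ∧ tI ω - tI (σ ω) = τ ∧ G (σ ω) = g ∧ A (σ ω) = a)) =
      ∑ ω' ∈ Finset.univ.filter (fun ω' => tI ω' = t - τ ∧ G ω' = g ∧ A ω' = a),
        ninf tI σ τ ω' := by
    unfold ninf cnt
    rw [← Nat.cast_sum]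
    congr 1
    rw [Finset.card_eq_sum_card_fiberwise (f := σ)
      (t := Finset.univ.filter (fun ω' => tI ω' = t - τ ∧ G ω' = g ∧ A ω' = a))]
    · apply Finset.sum_congr rfl
      intro ω' hω'
      simp only [Finset.mem_filter, Finset.mem_univ, true_and] at hω'
      congr 1
      ext ω
      simp only [Finset.mem_filter, Finset.mem_univ, true_and]
      constructor
      · rintro ⟨⟨hCω, hpos, hdiff, _, _⟩, hσω⟩
        exact ⟨hpos, hσω, hdiff⟩
      · rintro ⟨hpos, hσω, hdiff⟩
        have h1 : tI (σ ω) = t - τ := by rw [hσω]; exact hω'.1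
        refine ⟨⟨by linarith, hpos, hdiff, ?_, ?_⟩, hσω⟩
        · rw [hσω]; exact hω'.2.1
        · rw [hσω]; exact hω'.2.2
    · intro ω hω
      simp only [Finset.mem_coe, Finset.mem_filter, Finset.mem_univ, true_and] at hω ⊢
      obtain ⟨hCω, hpos, hdiff, hG, hA⟩ := hω
      exact ⟨by linarith, hG, hA⟩
  have h1 : cnt (fun ω : Ω => tI ω = t) *
      prC (fun ω => tI ω = t)
        (fun ω => 0 < tI ω ∧ tI ω - tI (σ ω) = τ ∧ G (σ ω) = g ∧ A (σ ω) = a) =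
      ∑ ω' ∈ Finset.univ.filter (fun ω' => tI ω' = t - τ ∧ G ω' = g ∧ A ω' = a),
        ninf tI σ τ ω' := by
    rw [prC, mul_div_cancel₀ _ hCcard]
    exact key
  refine ⟨h1, fun hF => ?_⟩
  have hFe : Finset.univ.filter (fun ω' => tI ω' = t - τ ∧ G ω' = g ∧ A ω' = a) =
      Finset.univ.filter (fun ω => tI ω = t - τ ∧ G ω = g ∧ A ω = a) := by
    ext ω; simp
  have hFcard : cnt (fun ω : Ω => tI ω = t - τ ∧ G ω = g ∧ A ω = a) ≠ 0 := by
    obtain ⟨ω, hω⟩ := hF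
    exact cnt_ne_zero' ⟨ω, (Finset.mem_filter.mp hω).2⟩
  have h2 : prC (fun ω => tI ω = t)
      (fun ω => 0 < tI ω ∧ tI ω - tI (σ ω) = τ ∧ G (σ ω) = g ∧ A (σ ω) = a) =
      (∑ ω' ∈ Finset.univ.filter (fun ω' => tI ω' = t - τ ∧ G ω' = g ∧ A ω' = a),
        ninf tI σ τ ω') / cnt (fun ω : Ω => tI ω = t) := by
    rw [prC, key]
  rw [h2, expecC, hFe]
  field_simp
  exact Finset.sum_congr (by ext ω; simp) (fun _ _ => rfl)
end
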